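/- For fixed reals x, y > 0 with x ≠ y, the Neumann free-fermion kernel K^N(u,v) = (1/(2π)) + (1/π) ∑_{k=1}^{N-1} cos(ku/2) cos(kv/2) satisfies lim_{N→∞} (2π/N) K^N(2πx/N, 2πy/N) = sin(π(x-y))/(π(x-y)) + sin(π(x+y))/(π(x+y)). -/

import Mathlib

open Real Finset Filter

lemma sum_cos_mul (θ : ℝ) (m : ℕ) :
    (∑ k ∈ Finset.Icc 1 m, Real.cos (k * θ)) * (2 * Real.sin (θ / 2)) =
      Real.sin (((m : ℝ) + 1 / 2) * θ) - Real.sin (θ / 2) := by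
  induction m with
  | zero => simp; ring_nf
  | succ n ih =>
    rw [Finset.sum_Icc_succ_top (by omega)]
    have h := Real.sin_sub_sin (((n : ℝ) + 1 + 1 / 2) * θ) (((n : ℝ) + 1 / 2) * θ)
    have h1 : ((((n : ℝ) + 1 + 1 / 2) * θ - ((n : ℝ) + 1 / 2) * θ) / 2) = θ / 2 := by ring
    have h2 : ((((n : ℝ) + 1 + 1 / 2) * θ + ((n : ℝ) + 1 / 2) * θ) / 2) = ((n : ℝ) + 1) * θ := by
      ring
    rw [h1, h2] at h
    push_cast
    nlinarith [ih, h]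

lemma sin_t_div_t : Tendsto (fun t : ℝ => Real.sin t / t) (nhdsWithin 0 {(0:ℝ)}ᶜ) (nhds 1) := by
  have h := hasDerivAt_iff_tendsto_slope.1 (Real.hasDerivAt_sin 0)
  have e : slope Real.sin 0 = fun t => Real.sin t / t := by
    funext t; simp [slope_def_field]
  rw [e] at h; simpa using h

lemma aux_limit (a : ℝ) (ha : a ≠ 0) :
    Tendsto (fun N : ℕ => (1 / (N : ℝ)) * ∑ k ∈ Finset.Icc 1 (N - 1),
      Real.cos (k * (Real.pi * a / N))) atTop
      (nhds (Real.sin (Real.pi * a) / (Real.pi * a))) := by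
  have hpa : Real.pi * a ≠ 0 := mul_ne_zero Real.pi_ne_zero ha
  have ht0 : Tendsto (fun N : ℕ => Real.pi * a / (2 * N)) atTop (nhds 0) := by
    have h : Tendsto (fun N : ℕ => (Real.pi * a / 2) / N) atTop (nhds 0) :=
      tendsto_const_div_atTop_nhds_zero_nat _
    refine h.congr fun N => by ring
  have htne : ∀ᶠ N : ℕ in atTop, Real.pi * a / (2 * N) ≠ 0 := by
    filter_upwards [eventually_gt_atTop 0] with N hN
    have hN' : (0:ℝ) < N := Nat.cast_pos.2 hN
    exact div_ne_zero hpa (by positivity)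
  -- denominator limit
  have hden : Tendsto (fun N : ℕ => (N : ℝ) * (2 * Real.sin (Real.pi * a / (2 * N)))) atTop
      (nhds (Real.pi * a)) := by
    have h1 : Tendsto (fun N : ℕ =>
        (Real.pi * a) * (Real.sin (Real.pi * a / (2 * N)) / (Real.pi * a / (2 * N)))) atTop
        (nhds ((Real.pi * a) * 1)) :=
      tendsto_const_nhds.mul (sin_t_div_t.comp
        (tendsto_nhdsWithin_iff.2 ⟨ht0, htne.mono fun N h => h⟩))
    rw [mul_one] at h1
    refine h1.congr' ?_
    filter_upwards [eventually_gt_atTop 0] with N hN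
    have hN' : (N : ℝ) ≠ 0 := Nat.cast_ne_zero.2 hN.ne'
    field_simp
  -- numerator limit
  have hnum : Tendsto (fun N : ℕ =>
      Real.sin ((((N : ℝ) - 1) + 1 / 2) * (Real.pi * a / N)) -
        Real.sin (Real.pi * a / (2 * N))) atTop (nhds (Real.sin (Real.pi * a) - 0)) := by
    have harg : Tendsto (fun N : ℕ => (((N : ℝ) - 1) + 1 / 2) * (Real.pi * a / N)) atTop
        (nhds (Real.pi * a)) := by
      have h2 : Tendsto (fun N : ℕ => Real.pi * a - (Real.pi * a / 2) / N) atTop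
          (nhds (Real.pi * a - 0)) :=
        tendsto_const_nhds.sub (tendsto_const_div_atTop_nhds_zero_nat _)
      rw [sub_zero] at h2
      refine h2.congr' ?_
      filter_upwards [eventually_gt_atTop 0] with N hN
      have hN' : (N : ℝ) ≠ 0 := Nat.cast_ne_zero.2 hN.ne'
      field_simp
      ring
    exact ((Real.continuous_sin.tendsto _).comp harg).sub
      (by have h0 := (Real.continuous_sin.tendsto 0).comp ht0; rw [Real.sin_zero] at h0; exact h0)
  rw [sub_zero] at hnum
  have hg := hnum.div hden hpa
  refine (Tendsto.congr' ?_ hg).mono_right le_rfl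
  symm
  filter_upwards [eventually_gt_atTop (max 1 ⌈|a|⌉₊)] with N hN
  have hN1 : 1 ≤ N := le_trans (le_max_left _ _) hN.le
  have hNr : (0:ℝ) < N := Nat.cast_pos.2 (by omega)
  have hNa : |a| < N := by
    calc |a| ≤ ⌈|a|⌉₊ := Nat.le_ceil _
    _ < N := by exact_mod_cast lt_of_le_of_lt (le_max_right 1 _) hN
  -- sin (π a / (2N)) ≠ 0
  have htlt : |Real.pi * a / (2 * N)| < Real.pi := by
    rw [abs_div, abs_mul, abs_mul, abs_of_pos Real.pi_pos, abs_of_pos (by norm_num : (0:ℝ) < 2),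
      abs_of_pos hNr, div_lt_iff₀ (by positivity)]
    nlinarith [Real.pi_pos, abs_nonneg a]
  have htne' : Real.pi * a / (2 * N) ≠ 0 := div_ne_zero hpa (by positivity)
  have hs : Real.sin (Real.pi * a / (2 * N)) ≠ 0 := by
    intro h
    exact htne' ((Real.sin_eq_zero_iff_of_lt_of_lt (neg_lt_of_abs_lt htlt)
      (lt_of_abs_lt htlt)).1 h)
  have key := sum_cos_mul (Real.pi * a / N) (N - 1)
  have hcast : ((N - 1 : ℕ) : ℝ) = (N : ℝ) - 1 := by
    push_cast [hN1]; ring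
  have hhalf : (Real.pi * a / N) / 2 = Real.pi * a / (2 * N) := by ring
  rw [hcast, hhalf] at key
  have h2s : (2 : ℝ) * Real.sin (Real.pi * a / (2 * N)) ≠ 0 := by
    simpa using hs
  simp only [Pi.div_apply]
  rw [eq_div_iff (mul_ne_zero hNr.ne' h2s)]
  calc (1 / (N:ℝ)) * (∑ k ∈ Finset.Icc 1 (N - 1), Real.cos (k * (Real.pi * a / N)))
        * ((N:ℝ) * (2 * Real.sin (Real.pi * a / (2 * N))))
      = (∑ k ∈ Finset.Icc 1 (N - 1), Real.cos (k * (Real.pi * a / N)))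
        * (2 * Real.sin (Real.pi * a / (2 * N))) := by
        linear_combination (∑ k ∈ Finset.Icc 1 (N - 1), Real.cos (k * (Real.pi * a / N)))
          * (2 * Real.sin (Real.pi * a / (2 * N))) * div_self hNr.ne'
    _ = _ := by rw [key]

theorem neumann_edge_scaling_to_bessel (x y : ℝ) (hx : 0 < x) (hy : 0 < y)
    (hxy : x ≠ y) :
    Tendsto
      (fun N : ℕ => (2 * Real.pi / N) *
        (1 / (2 * Real.pi) + (1 / Real.pi) * ∑ k ∈ Finset.Icc 1 (N - 1),
          Real.cos (k * (2 * Real.pi * x / N) / 2) *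
            Real.cos (k * (2 * Real.pi * y / N) / 2)))
      atTop
      (nhds (Real.sin (Real.pi * (x - y)) / (Real.pi * (x - y)) +
        Real.sin (Real.pi * (x + y)) / (Real.pi * (x + y)))) := by
  have h1 := aux_limit (x - y) (sub_ne_zero.2 hxy)
  have h2 := aux_limit (x + y) (by positivity)
  have h0 : Tendsto (fun N : ℕ => (1 : ℝ) / N) atTop (nhds 0) :=
    tendsto_one_div_atTop_nhds_zero_nat
  have hlim := (h0.add h1).add h2
  rw [zero_add] at hlim
  refine Tendsto.congr' ?_ hlim
  filter_upwards [eventually_gt_atTop 0] with N hN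
  have hNr : (N : ℝ) ≠ 0 := Nat.cast_ne_zero.2 hN.ne'
  have hsummand : ∀ k : ℕ,
      Real.cos (k * (2 * Real.pi * x / N) / 2) * Real.cos (k * (2 * Real.pi * y / N) / 2) =
        (Real.cos (k * (Real.pi * (x - y) / N)) + Real.cos (k * (Real.pi * (x + y) / N))) / 2 := by
    intro k
    have h := Real.two_mul_cos_mul_cos (k * (2 * Real.pi * x / N) / 2)
      (k * (2 * Real.pi * y / N) / 2)
    have e1 : (k : ℝ) * (2 * Real.pi * x / N) / 2 - k * (2 * Real.pi * y / N) / 2 =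
        k * (Real.pi * (x - y) / N) := by ring
    have e2 : (k : ℝ) * (2 * Real.pi * x / N) / 2 + k * (2 * Real.pi * y / N) / 2 =
        k * (Real.pi * (x + y) / N) := by ring
    rw [e1, e2] at h
    linarith
  simp only [hsummand, ← Finset.sum_div, Finset.sum_add_distrib]
  linear_combination -(1 + ∑ k ∈ Finset.Icc 1 (N - 1), Real.cos (k * (Real.pi * (x - y) / N))
    + ∑ k ∈ Finset.Icc 1 (N - 1), Real.cos (k * (Real.pi * (x + y) / N))) / (N : ℝ)
    * div_self Real.pi_ne_zero
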